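/- Let m ≥ 2 be an integer, let a and c be real numbers, and let p, q be coprime real polynomials with q not identically zero and deg p ≥ 1, satisfying the polynomial identity X·q^{m−1}·(p'·q − p·q') = −c·p^{m+1} + a·p·q^m − q^{m+1} in ℝ[X]. Then c = 0. -/

import Mathlib

open Polynomial

/-- if coprime real polynomials p, q with q ≠ 0 and deg p ≥ 1
satisfy X·q^{m−1}·(p'·q − p·q') = −c·p^{m+1} + a·p·q^m − q^{m+1}, then c = 0. -/
theorem stmt_17 (m : ℕ) (hm : 2 ≤ m) (a c : ℝ)
    (p q : Polynomial ℝ)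
    (hcop : IsCoprime p q)
    (hq : q ≠ 0)
    (hp : 1 ≤ p.natDegree)
    (hid : X * q ^ (m - 1) * (derivative p * q - p * derivative q) =
      -C c * p ^ (m + 1) + C a * p * q ^ m - q ^ (m + 1)) :
    c = 0 := by
  by_contra hc
  have hp0 : p ≠ 0 := fun h => by simp [h] at hp
  set n := p.natDegree with hn
  -- q divides C c * p ^ (m+1)
  have hdvd : q ∣ C c * p ^ (m + 1) := by
    have h1 : q ∣ X * q ^ (m - 1) * (derivative p * q - p * derivative q) :=
      ((dvd_pow_self q (show m - 1 ≠ 0 by omega)).mul_left X).mul_right _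
    have heq : C c * p ^ (m + 1) =
        -(X * q ^ (m - 1) * (derivative p * q - p * derivative q)) +
          C a * p * q ^ m - q ^ (m + 1) := by
      rw [hid]; ring
    rw [heq]
    exact dvd_sub (dvd_add (dvd_neg.mpr h1)
      (Dvd.dvd.mul_left (dvd_pow_self q (by omega)) _)) (dvd_pow_self q (by omega))
  have hqc : q ∣ C c := (hcop.symm.pow_right).dvd_of_dvd_mul_right hdvd
  have hq0 : q.natDegree = 0 := by
    have := Polynomial.natDegree_le_of_dvd hqc (by simpa using hc)
    simpa using this
  -- degree bounds
  have hL : (X * q ^ (m - 1) * (derivative p * q - p * derivative q)).natDegree ≤ n := by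
    obtain ⟨b, hb⟩ := Polynomial.natDegree_eq_zero.mp hq0
    have hdq : derivative q = 0 := by rw [← hb]; simp
    rw [hdq]
    simp only [mul_zero, sub_zero]
    calc (X * q ^ (m - 1) * (derivative p * q)).natDegree
        ≤ (X * q ^ (m - 1)).natDegree + (derivative p * q).natDegree :=
          natDegree_mul_le
      _ ≤ (X.natDegree + (q ^ (m - 1)).natDegree) +
            ((derivative p).natDegree + q.natDegree) :=
          Nat.add_le_add natDegree_mul_le natDegree_mul_le
      _ ≤ (1 + 0) + ((n - 1) + 0) := by
          gcongr
          · exact le_of_eq natDegree_X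
          · simp [natDegree_pow, hq0]
          · exact Nat.le_sub_one_of_lt (natDegree_derivative_lt (by omega))
          · exact le_of_eq hq0
      _ ≤ n := by omega
  have ht1 : (-C c * p ^ (m + 1)).natDegree = (m + 1) * n := by
    rw [neg_mul, natDegree_neg, natDegree_C_mul hc, natDegree_pow]
  have ht2 : (C a * p * q ^ m - q ^ (m + 1)).natDegree ≤ n := by
    calc (C a * p * q ^ m - q ^ (m + 1)).natDegree
        ≤ max (C a * p * q ^ m).natDegree ((q ^ (m + 1)).natDegree) :=
          natDegree_sub_le _ _
      _ ≤ n := by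
          apply max_le
          · calc (C a * p * q ^ m).natDegree
                ≤ (C a * p).natDegree + (q ^ m).natDegree := natDegree_mul_le
              _ ≤ ((C a).natDegree + p.natDegree) + (q ^ m).natDegree := by
                  gcongr; exact natDegree_mul_le
              _ ≤ (0 + n) + 0 := by simp [natDegree_pow, hq0, hn]
              _ ≤ n := by omega
          · simp [natDegree_pow, hq0]
  have hlt : n < (m + 1) * n := by nlinarith
  have hR : (-C c * p ^ (m + 1) + C a * p * q ^ m - q ^ (m + 1)).natDegree
      = (m + 1) * n := by
    have : -C c * p ^ (m + 1) + C a * p * q ^ m - q ^ (m + 1)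
        = -C c * p ^ (m + 1) + (C a * p * q ^ m - q ^ (m + 1)) := by ring
    rw [this, natDegree_add_eq_left_of_natDegree_lt (by omega), ht1]
  rw [hid, hR] at hL
  omega
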